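/- Let β₁, β₀, c ∈ ℝ with β₁ > 0 and β₀ < 0, and let W : [0,1]² → ℝ be defined by W(x,y) = β₁x + β₀y + c if x > y; W(x,y) = (β₁+β₀)x + c if x = y; W(x,y) = β₁y + β₀x + c if x < y. Let d : ℝ² → [0,1]² be the plug-in rule: d(b₁, b₀) = (1,0) if b₁ > 0 and b₀ < 0; d(b₁, b₀) = (1,1) if (b₁ ≤ 0 or b₀ ≥ 0) and b₁ + b₀ > 0; d(b₁, b₀) = (0,0) otherwise. Let (Ω, μ) be a probability space and B₁, B₀ : Ω → ℝ measurable. Then E[ W(1,0) − W(d(B₁, B₀)) ] ≤ (β₁ − β₀)·( μ(B₁ ≤ 0) + μ(B₀ ≥ 0) ), and W(1,0) = max over [0,1]² of W. -/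

import Mathlib

open MeasureTheory

/-- When `β₁ > 0` and `β₀ < 0`, the expected regret of the plug-in
rule `d(B₁, B₀)` is bounded by `(β₁ - β₀)(P(B₁ ≤ 0) + P(B₀ ≥ 0))`, and `(1,0)`
maximizes the welfare `W` over `[0,1]²`. -/
theorem stmt_17 (β₁ β₀ c : ℝ) (h₁ : β₁ > 0) (h₀ : β₀ < 0)
    (W : ℝ → ℝ → ℝ)
    (hW : ∀ x y, W x y =
      if x > y then β₁ * x + β₀ * y + c
      else if x = y then (β₁ + β₀) * x + c
      else β₁ * y + β₀ * x + c)
    (d : ℝ → ℝ → ℝ × ℝ)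
    (hd : ∀ b₁ b₀, d b₁ b₀ =
      if b₁ > 0 ∧ b₀ < 0 then ((1:ℝ), (0:ℝ))
      else if (b₁ ≤ 0 ∨ b₀ ≥ 0) ∧ b₁ + b₀ > 0 then (1, 1)
      else (0, 0))
    {Ω : Type*} [MeasurableSpace Ω] (μ : Measure Ω) [IsProbabilityMeasure μ]
    (B₁ B₀ : Ω → ℝ) (hB₁ : Measurable B₁) (hB₀ : Measurable B₀) :
    (∫ ω, (W 1 0 - W (d (B₁ ω) (B₀ ω)).1 (d (B₁ ω) (B₀ ω)).2) ∂μ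
        ≤ (β₁ - β₀) * ((μ {ω | B₁ ω ≤ 0}).toReal + (μ {ω | B₀ ω ≥ 0}).toReal)) ∧
      (∀ x ∈ Set.Icc (0:ℝ) 1, ∀ y ∈ Set.Icc (0:ℝ) 1, W x y ≤ W 1 0) := by
  have hW10 : W 1 0 = β₁ + c := by rw [hW]; norm_num
  have hmax : ∀ x ∈ Set.Icc (0:ℝ) 1, ∀ y ∈ Set.Icc (0:ℝ) 1, W x y ≤ W 1 0 := by
    intro x hx y hy
    simp only [Set.mem_Icc] at hx hy
    rw [hW, hW10]
    split_ifs <;> nlinarith [hx.1, hx.2, hy.1, hy.2]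
  refine ⟨?_, hmax⟩
  set A : Set Ω := {ω | B₁ ω ≤ 0} with hAdef
  set B : Set Ω := {ω | B₀ ω ≥ 0} with hBdef
  have hA : MeasurableSet A := hB₁ measurableSet_Iic
  have hB : MeasurableSet B := hB₀ measurableSet_Ici
  set f : Ω → ℝ := fun ω => W 1 0 - W (d (B₁ ω) (B₀ ω)).1 (d (B₁ ω) (B₀ ω)).2 with hfdef
  set g : Ω → ℝ := fun ω =>
    (β₁ - β₀) * (A.indicator (fun _ => (1:ℝ)) ω + B.indicator (fun _ => (1:ℝ)) ω) with hgdef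
  have hdmem : ∀ b₁ b₀ : ℝ, (d b₁ b₀).1 ∈ Set.Icc (0:ℝ) 1 ∧ (d b₁ b₀).2 ∈ Set.Icc (0:ℝ) 1 := by
    intro b₁ b₀
    rw [hd]
    split_ifs <;> simp
  have hf0 : ∀ ω, 0 ≤ f ω := by
    intro ω
    have := hmax _ (hdmem (B₁ ω) (B₀ ω)).1 _ (hdmem (B₁ ω) (B₀ ω)).2
    simp only [hfdef]
    linarith
  have hfg : ∀ ω, f ω ≤ g ω := by
    intro ω
    simp only [hfdef, hgdef]
    by_cases h : B₁ ω > 0 ∧ B₀ ω < 0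
    · rw [hd, if_pos h]
      have h1 : A.indicator (fun _ => (1:ℝ)) ω ≥ 0 := Set.indicator_nonneg (by norm_num) _
      have h2 : B.indicator (fun _ => (1:ℝ)) ω ≥ 0 := Set.indicator_nonneg (by norm_num) _
      nlinarith
    · have hmem : ω ∈ A ∨ ω ∈ B := by
        rw [hAdef, hBdef]
        simp only [Set.mem_setOf_eq]
        by_contra hc
        push_neg at hc
        exact h ⟨hc.1, hc.2⟩
      have hind : (1:ℝ) ≤ A.indicator (fun _ => (1:ℝ)) ω + B.indicator (fun _ => (1:ℝ)) ω := by
        have h1 : A.indicator (fun _ => (1:ℝ)) ω ≥ 0 := Set.indicator_nonneg (by norm_num) _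
        have h2 : B.indicator (fun _ => (1:ℝ)) ω ≥ 0 := Set.indicator_nonneg (by norm_num) _
        rcases hmem with hm | hm
        · rw [Set.indicator_of_mem hm]; linarith
        · rw [Set.indicator_of_mem hm]; linarith
      have hg1 : β₁ - β₀ ≤ (β₁ - β₀) * (A.indicator (fun _ => (1:ℝ)) ω + B.indicator (fun _ => (1:ℝ)) ω) := by
        nlinarith
      rw [hd]
      rw [if_neg h]
      split_ifs with h2
      · have : W (1:ℝ) (1:ℝ) = β₁ + β₀ + c := by rw [hW]; norm_num
        rw [this, hW10]; linarith
      · have : W (0:ℝ) (0:ℝ) = c := by rw [hW]; norm_num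
        rw [this, hW10]; linarith
  have hgint : Integrable g μ := by
    apply Integrable.const_mul
    exact ((integrable_const (1:ℝ)).indicator hA).add ((integrable_const (1:ℝ)).indicator hB)
  have hle : ∫ ω, f ω ∂μ ≤ ∫ ω, g ω ∂μ :=
    integral_mono_of_nonneg (Filter.Eventually.of_forall hf0) hgint
      (Filter.Eventually.of_forall hfg)
  have hgval : ∫ ω, g ω ∂μ = (β₁ - β₀) * ((μ A).toReal + (μ B).toReal) := by
    simp only [hgdef]
    rw [integral_const_mul, integral_add ((integrable_const (1:ℝ)).indicator hA)
      ((integrable_const (1:ℝ)).indicator hB)]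
    rw [integral_indicator_const _ hA, integral_indicator_const _ hB]
    simp [Measure.real]
  calc ∫ ω, f ω ∂μ ≤ ∫ ω, g ω ∂μ := hle
    _ = (β₁ - β₀) * ((μ A).toReal + (μ B).toReal) := hgval
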